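/- Fix integers r ≥ 1 and m* ≥ r. For each n, let p_n > m* be an integer and let Ŵ⁽ⁿ⁾ be a random p_n × p_n real symmetric positive semidefinite matrix whose entrywise expectation W⁽ⁿ⁾ = E[Ŵ⁽ⁿ⁾] is symmetric positive semidefinite of rank r. Write λ̂₁⁽ⁿ⁾ ≥ … ≥ λ̂_{p_n}⁽ⁿ⁾ for the eigenvalues of Ŵ⁽ⁿ⁾ and λ₁⁽ⁿ⁾ ≥ … ≥ λ_r⁽ⁿ⁾ > 0 = λ_{r+1}⁽ⁿ⁾ = … = λ_{p_n}⁽ⁿ⁾ for those of W⁽ⁿ⁾, and assume λ_r⁽ⁿ⁾ → ∞ as n → ∞. Let γ_n > 0 and β_n > 0 be deterministic sequences such that: (a) for every ε > 0 there exists M > 0 with limsup_n P(|λ̂₁⁽ⁿ⁾ − λ₁⁽ⁿ⁾| > ε·λ₁⁽ⁿ⁾ + M·γ_n) ≤ ε and limsup_n P(|λ̂_r⁽ⁿ⁾ − λ_r⁽ⁿ⁾| > ε·λ_r⁽ⁿ⁾ + M·γ_n) ≤ ε; (b) for every ε > 0 there exists M > 0 with limsup_n P(λ̂_{r+1}⁽ⁿ⁾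 > M·β_n) ≤ ε. Let h_n > 0 be a deterministic penalty sequence satisfying (h_n + β_n)·λ₁⁽ⁿ⁾/(λ_r⁽ⁿ⁾)² → 0, γ_n/λ_r⁽ⁿ⁾ → 0, and h_n·λ_r⁽ⁿ⁾/β_n² → ∞. Then P( m = r is the unique minimizer over m ∈ {1,…,m*} of the ratio (λ̂_{m+1}⁽ⁿ⁾ + h_n)/(λ̂_m⁽ⁿ⁾ + h_n) ) → 1 as n → ∞. -/

import Mathlib

open MeasureTheory Filter Matrix


private lemma er_aux1 {h l1 lr lr1 lm lm1 : ℝ} (hh : 0 < h) (h1 : 0 ≤ lm1)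
    (hkey : (lr1 + h) * (l1 + h) < (lr + h) ^ 2) (hlr1 : 0 ≤ lr1 + h) (hle : lr1 ≤ lr)
    (hlmr : lr ≤ lm) (hlm1 : lm1 ≤ l1) :
    (lr1 + h) / (lr + h) < (lm + h) / (lm1 + h) := by
  have hlm1h : 0 < lm1 + h := by linarith
  have hl1h : 0 < l1 + h := by linarith
  have hlrh : 0 < lr + h := by nlinarith [mul_nonneg hlr1 hl1h.le]
  have hlmh : 0 < lm + h := by linarith
  rw [div_lt_div_iff₀ hlrh hlm1h]
  have s1 : (lr1 + h) * (lm1 + h) ≤ (lr1 + h) * (l1 + h) :=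
    mul_le_mul_of_nonneg_left (by linarith) hlr1
  have s2 : (lr + h) ^ 2 ≤ (lm + h) * (lr + h) := by nlinarith
  linarith

private lemma er_aux2 {h lr lr1 lm lm1 : ℝ} (hh : 0 < h) (h0 : 0 ≤ lr1) (hm0 : 0 ≤ lm)
    (hm1 : 0 ≤ lm1) (hkey : (lr1 + h) ^ 2 < h * (lr + h)) (hlm1 : lm1 ≤ lr1) :
    (lr1 + h) / (lr + h) < (lm + h) / (lm1 + h) := by
  have hr1h : 0 < lr1 + h := by linarith
  have hlm1h : 0 < lm1 + h := by linarith
  have hlrh : 0 < lr + h := by nlinarith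
  have hlmh : 0 < lm + h := by linarith
  rw [div_lt_div_iff₀ hlrh hlm1h]
  have s1 : (lr1 + h) * (lm1 + h) ≤ (lr1 + h) * (lr1 + h) :=
    mul_le_mul_of_nonneg_left (by linarith) hr1h.le
  have s2 : h * (lr + h) ≤ (lm + h) * (lr + h) :=
    mul_le_mul_of_nonneg_right (by linarith) hlrh.le
  nlinarith [sq_nonneg (lr1 + h)]


private lemma er_div_bound {h β L1 Lr : ℝ} (hh : 0 < h) (hb : 0 < β) (hLr : 0 < Lr)
    (hL1 : Lr ≤ L1) : h / Lr ≤ (h + β) * L1 / Lr ^ 2 := by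
  rw [div_le_div_iff₀ hLr (pow_pos hLr 2)]
  have key : h * Lr ≤ (h + β) * L1 :=
    mul_le_mul (by linarith) hL1 hLr.le (by linarith)
  nlinarith [mul_le_mul_of_nonneg_right key hLr.le]

private lemma er_keys {ε' M₁ M₂ M₃ K γ β h L1 Lr l1 lr lr1 : ℝ}
    (hε'half : ε' ≤ 1 / 2) (hM₃ : 0 < M₃) (hK1 : 1 ≤ K) (hKM : M₃ ≤ K)
    (hβp : 0 < β) (hhp : 0 < h) (hLrp : 0 < Lr) (hL1Lr : Lr ≤ L1)
    (e1 : M₂ * γ ≤ Lr / 8) (e2 : M₁ * γ ≤ L1 / 2) (e4 : h < Lr / 16)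
    (e5 : 3 * K * (β + h) * L1 < Lr ^ 2 / 16) (e6 : 16 * K ^ 2 * β ^ 2 ≤ h * Lr)
    (w1 : |l1 - L1| ≤ ε' * L1 + M₁ * γ) (w2 : |lr - Lr| ≤ ε' * Lr + M₂ * γ)
    (w3 : lr1 ≤ M₃ * β) (hl1nn : 0 ≤ l1) (hlr1nn : 0 ≤ lr1) :
    (lr1 + h) * (l1 + h) < (lr + h) ^ 2 ∧ (lr1 + h) ^ 2 < h * (lr + h) := by
  have hL1p : 0 < L1 := lt_of_lt_of_le hLrp hL1Lr
  have hεL1 : ε' * L1 ≤ L1 / 2 := by nlinarith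
  have hεLr : ε' * Lr ≤ Lr / 2 := by nlinarith
  have habs1 := abs_le.mp w1
  have habs2 := abs_le.mp w2
  have hl1up : l1 ≤ 2 * L1 := by linarith [habs1.2]
  have hlrlow : Lr / 4 ≤ lr := by linarith [habs2.1]
  have hc1 : M₃ * β + h ≤ K * (β + h) := by
    have h1 : M₃ * β ≤ K * β := mul_le_mul_of_nonneg_right hKM hβp.le
    have h2 : h ≤ K * h := le_mul_of_one_le_left hhp.le hK1
    nlinarith
  constructor
  · have b1 : (lr1 + h) * (l1 + h) ≤ (M₃ * β + h) * (2 * L1 + h) :=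
      mul_le_mul (by linarith) (by linarith) (by linarith) (by positivity)
    have b2 : (M₃ * β + h) * (2 * L1 + h) ≤ K * (β + h) * (3 * L1) := by
      have hc2 : 2 * L1 + h ≤ 3 * L1 := by linarith
      have := mul_le_mul hc1 hc2 (by linarith) (by positivity)
      linarith
    have b4 : Lr ^ 2 / 16 ≤ (lr + h) ^ 2 := by
      have := pow_le_pow_left₀ (by positivity : (0:ℝ) ≤ Lr / 4)
        (by linarith : Lr / 4 ≤ lr + h) 2
      linarith [this]
    linarith
  · have c1 : (lr1 + h) ^ 2 ≤ (M₃ * β + h) ^ 2 :=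
      pow_le_pow_left₀ (by linarith) (by linarith) 2
    have c2 : (M₃ * β + h) ^ 2 ≤ 2 * K ^ 2 * β ^ 2 + 2 * h ^ 2 := by
      have hsq : M₃ ^ 2 ≤ K ^ 2 := pow_le_pow_left₀ hM₃.le hKM 2
      linarith [sq_nonneg (M₃ * β - h), mul_le_mul_of_nonneg_right hsq (sq_nonneg β)]
    have c3 : 2 * K ^ 2 * β ^ 2 ≤ h * Lr / 8 := by linarith
    have c4 : 2 * h ^ 2 < h * Lr / 8 := by
      linarith [mul_lt_mul_of_pos_left e4 hhp]
    have c5 : h * (Lr / 4) ≤ h * lr := mul_le_mul_of_nonneg_left hlrlow hhp.le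
    linarith [sq_nonneg h, c1, c2, c3, c4, c5]

set_option maxHeartbeats 2000000 in
/-- consistency of the eigen-ratio rank estimator, Proposition 1(ii):
with sample eigenvalues λ̂⁽ⁿ⁾ (in decreasing order) of the random p_n × p_n symmetric
psd matrix Ŵ⁽ⁿ⁾, whose entrywise expectation W⁽ⁿ⁾ is symmetric psd of rank r with
decreasingly ordered eigenvalues λ⁽ⁿ⁾ satisfying λ_r⁽ⁿ⁾ → ∞, under the ε–M limsup tail
conditions on the eigenvalue estimation errors with rates γ_n, β_n and a penalty
h_n > 0 with (h_n + β_n)·λ₁⁽ⁿ⁾/(λ_r⁽ⁿ⁾)² → 0, γ_n/λ_r⁽ⁿ⁾ → 0 and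
h_n·λ_r⁽ⁿ⁾/β_n² → ∞, the probability that m = r uniquely minimizes
ER(m) = (λ̂_{m+1}⁽ⁿ⁾ + h_n)/(λ̂_m⁽ⁿ⁾ + h_n) over m ∈ {1,…,m*} tends to 1.
(Eigenvalues are 0-indexed: `lam n ⟨k-1,_⟩` is the k-th largest, so
ER(m) = (lamhat n ω ⟨m,_⟩ + h n)/(lamhat n ω ⟨m-1,_⟩ + h n).) -/
theorem stmt1
    (r mstar : ℕ) (hr : 1 ≤ r) (hrm : r ≤ mstar)
    (p : ℕ → ℕ) (hp : ∀ n, mstar < p n)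
    {Ω : Type*} [MeasurableSpace Ω] (P : Measure Ω) [IsProbabilityMeasure P]
    (What : (n : ℕ) → Ω → Matrix (Fin (p n)) (Fin (p n)) ℝ)
    (hmeas : ∀ n (i j : Fin (p n)), Measurable fun ω => What n ω i j)
    (hWhatpsd : ∀ n ω, (What n ω).PosSemidef)
    (W : (n : ℕ) → Matrix (Fin (p n)) (Fin (p n)) ℝ)
    (hWE : ∀ n (i j : Fin (p n)), W n i j = ∫ ω, What n ω i j ∂P)
    (hWpsd : ∀ n, (W n).PosSemidef)
    (hWrank : ∀ n, (W n).rank = r)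
    -- λ̂ n ω : the eigenvalues of Ŵ⁽ⁿ⁾(ω), listed in decreasing order
    (lamhat : (n : ℕ) → Ω → Fin (p n) → ℝ)
    (hlamhat_anti : ∀ n ω, Antitone (lamhat n ω))
    (hlamhat_eig : ∀ n ω, ∃ σ : Equiv.Perm (Fin (p n)),
        lamhat n ω = (hWhatpsd n ω).isHermitian.eigenvalues ∘ σ)
    -- λ n : the eigenvalues of W⁽ⁿ⁾, listed in decreasing order; the top r are
    -- positive and the remaining p_n − r are zero
    (lam : (n : ℕ) → Fin (p n) → ℝ)
    (hlam_anti : ∀ n, Antitone (lam n))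
    (hlam_eig : ∀ n, ∃ σ : Equiv.Perm (Fin (p n)),
        lam n = (hWpsd n).isHermitian.eigenvalues ∘ σ)
    (hlam_pos : ∀ n (j : Fin (p n)), (j : ℕ) < r → 0 < lam n j)
    (hlam_zero : ∀ n (j : Fin (p n)), r ≤ (j : ℕ) → lam n j = 0)
    (hlam_r : Tendsto (fun n => lam n ⟨r - 1, by have := hp n; omega⟩) atTop atTop)
    (γ β : ℕ → ℝ) (hγ : ∀ n, 0 < γ n) (hβ : ∀ n, 0 < β n)
    -- condition (a): |λ̂₁ − λ₁| = o_P(λ₁) + O_P(γ_n) and |λ̂_r − λ_r| = o_P(λ_r) + O_P(γ_n)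
    (ha1 : ∀ ε : ℝ, 0 < ε → ∃ M : ℝ, 0 < M ∧
        limsup (fun n => P {ω |
            ε * lam n ⟨0, by have := hp n; omega⟩ + M * γ n <
              |lamhat n ω ⟨0, by have := hp n; omega⟩ -
                lam n ⟨0, by have := hp n; omega⟩|}) atTop ≤ ENNReal.ofReal ε)
    (ha2 : ∀ ε : ℝ, 0 < ε → ∃ M : ℝ, 0 < M ∧
        limsup (fun n => P {ω |
            ε * lam n ⟨r - 1, by have := hp n; omega⟩ + M * γ n <
              |lamhat n ω ⟨r - 1, by have := hp n; omega⟩ -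
                lam n ⟨r - 1, by have := hp n; omega⟩|}) atTop ≤ ENNReal.ofReal ε)
    -- condition (b): λ̂_{r+1} = O_P(β_n)
    (hb : ∀ ε : ℝ, 0 < ε → ∃ M : ℝ, 0 < M ∧
        limsup (fun n => P {ω |
            M * β n < lamhat n ω ⟨r, by have := hp n; omega⟩}) atTop ≤ ENNReal.ofReal ε)
    -- the penalty sequence
    (h : ℕ → ℝ) (hhpos : ∀ n, 0 < h n)
    (hh1 : Tendsto (fun n => (h n + β n) * lam n ⟨0, by have := hp n; omega⟩ /
        (lam n ⟨r - 1, by have := hp n; omega⟩) ^ 2) atTop (nhds 0))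
    (hh2 : Tendsto (fun n => γ n / lam n ⟨r - 1, by have := hp n; omega⟩) atTop (nhds 0))
    (hh3 : Tendsto (fun n => h n * lam n ⟨r - 1, by have := hp n; omega⟩ / (β n) ^ 2)
      atTop atTop) :
    Tendsto (fun n => P {ω | ∀ m, 1 ≤ m → ∀ hm2 : m ≤ mstar, m ≠ r →
        (lamhat n ω ⟨r, by have := hp n; omega⟩ + h n) /
            (lamhat n ω ⟨r - 1, by have := hp n; omega⟩ + h n) <
          (lamhat n ω ⟨m, by have := hp n; omega⟩ + h n) /
            (lamhat n ω ⟨m - 1, by have := hp n; omega⟩ + h n)}) atTop (nhds 1) := by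
  
  classical
  -- notation
  have hr1p : ∀ n, r - 1 < p n := fun n => by have := hp n; omega
  have hrp : ∀ n, r < p n := fun n => by have := hp n; omega
  have h0p : ∀ n, 0 < p n := fun n => by have := hp n; omega
  -- nonnegativity of sample eigenvalues
  have lamhat_nonneg : ∀ n ω (j : Fin (p n)), 0 ≤ lamhat n ω j := by
    intro n ω j
    obtain ⟨σ, hσ⟩ := hlamhat_eig n ω
    rw [hσ]
    exact (hWhatpsd n ω).eigenvalues_nonneg _
  have hLr_pos : ∀ n, 0 < lam n ⟨r - 1, hr1p n⟩ := fun n => hlam_pos n _ (by simp; omega)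
  have hL1_ge : ∀ n, lam n ⟨r - 1, hr1p n⟩ ≤ lam n ⟨0, h0p n⟩ :=
    fun n => hlam_anti n (Fin.mk_le_mk.mpr (Nat.zero_le _))
  have hL1_pos : ∀ n, 0 < lam n ⟨0, h0p n⟩ := fun n => lt_of_lt_of_le (hLr_pos n) (hL1_ge n)
  -- h/Lr → 0 and β/Lr → 0
  have hhLr : Tendsto (fun n => h n / lam n ⟨r - 1, hr1p n⟩) atTop (nhds 0) := by
    exact squeeze_zero (fun n => div_nonneg (hhpos n).le (hLr_pos n).le)
      (fun n => er_div_bound (hhpos n) (hβ n) (hLr_pos n) (hL1_ge n)) hh1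
  -- the main eventual lower bound
  have main : ∀ ε : ℝ, 0 < ε → ∀ᶠ n in atTop,
      1 - ENNReal.ofReal ε ≤ P {ω | ∀ m, 1 ≤ m → ∀ hm2 : m ≤ mstar, m ≠ r →
        (lamhat n ω ⟨r, by have := hp n; omega⟩ + h n) /
            (lamhat n ω ⟨r - 1, by have := hp n; omega⟩ + h n) <
          (lamhat n ω ⟨m, by have := hp n; omega⟩ + h n) /
            (lamhat n ω ⟨m - 1, by have := hp n; omega⟩ + h n)} := by
    intro ε hε
    set ε' : ℝ := min (ε / 6) (1 / 2) with hε'def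
    have hε'pos : 0 < ε' := lt_min (by linarith) (by norm_num)
    have hε'half : ε' ≤ 1 / 2 := min_le_right _ _
    have hε'six : ε' ≤ ε / 6 := min_le_left _ _
    obtain ⟨M₁, hM₁, hlim1⟩ := ha1 ε' hε'pos
    obtain ⟨M₂, hM₂, hlim2⟩ := ha2 ε' hε'pos
    obtain ⟨M₃, hM₃, hlim3⟩ := hb ε' hε'pos
    set K : ℝ := max M₃ 1 with hKdef
    have hK1 : (1 : ℝ) ≤ K := le_max_right _ _
    have hKM : M₃ ≤ K := le_max_left _ _
    have hKpos : (0 : ℝ) < K := by linarith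
    have hofR : ENNReal.ofReal ε' < ENNReal.ofReal (2 * ε') :=
      (ENNReal.ofReal_lt_ofReal_iff (by linarith)).mpr (by linarith)
    have hp1 := eventually_lt_of_limsup_lt (lt_of_le_of_lt hlim1 hofR)
    have hp2 := eventually_lt_of_limsup_lt (lt_of_le_of_lt hlim2 hofR)
    have hp3 := eventually_lt_of_limsup_lt (lt_of_le_of_lt hlim3 hofR)
    -- deterministic eventual conditions
    have E1 : ∀ᶠ n in atTop, M₂ * γ n ≤ lam n ⟨r - 1, hr1p n⟩ / 8 := by
      filter_upwards [hh2.eventually_lt_const (show (0:ℝ) < 1 / (8 * M₂) by positivity)]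
        with n e
      rw [div_lt_div_iff₀ (hLr_pos n) (by positivity)] at e
      linarith
    have E2 : ∀ᶠ n in atTop, M₁ * γ n ≤ lam n ⟨0, h0p n⟩ / 2 := by
      filter_upwards [hh2.eventually_lt_const (show (0:ℝ) < 1 / (2 * M₁) by positivity)]
        with n e
      rw [div_lt_div_iff₀ (hLr_pos n) (by positivity)] at e
      have := hL1_ge n
      linarith
    have E4 : ∀ᶠ n in atTop, h n < lam n ⟨r - 1, hr1p n⟩ / 16 := by
      filter_upwards [hhLr.eventually_lt_const (show (0:ℝ) < 1 / 16 by norm_num)] with n e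
      rw [div_lt_div_iff₀ (hLr_pos n) (by norm_num)] at e
      linarith
    have E5 : ∀ᶠ n in atTop,
        3 * K * (β n + h n) * lam n ⟨0, h0p n⟩ < (lam n ⟨r - 1, hr1p n⟩) ^ 2 / 16 := by
      filter_upwards [hh1.eventually_lt_const (show (0:ℝ) < 1 / (48 * K) by positivity)]
        with n e
      rw [div_lt_div_iff₀ (pow_pos (hLr_pos n) 2) (by positivity)] at e
      linarith
    have E6 : ∀ᶠ n in atTop, 16 * K ^ 2 * (β n) ^ 2 ≤ h n * lam n ⟨r - 1, hr1p n⟩ := by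
      filter_upwards [hh3.eventually_ge_atTop (16 * K ^ 2)] with n e
      rw [le_div_iff₀ (pow_pos (hβ n) 2)] at e
      linarith
    filter_upwards [hp1, hp2, hp3, E1, E2, E4, E5, E6] with n hb1 hb2 hb3 e1 e2 e4 e5 e6
    set L1 := lam n ⟨0, h0p n⟩ with hL1def
    set Lr := lam n ⟨r - 1, hr1p n⟩ with hLrdef
    set B1 : Set Ω := {ω | ε' * lam n ⟨0, by have := hp n; omega⟩ + M₁ * γ n <
        |lamhat n ω ⟨0, by have := hp n; omega⟩ - lam n ⟨0, by have := hp n; omega⟩|}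
      with hB1def
    set B2 : Set Ω := {ω | ε' * lam n ⟨r - 1, by have := hp n; omega⟩ + M₂ * γ n <
        |lamhat n ω ⟨r - 1, by have := hp n; omega⟩ -
          lam n ⟨r - 1, by have := hp n; omega⟩|} with hB2def
    set B3 : Set Ω := {ω | M₃ * β n < lamhat n ω ⟨r, by have := hp n; omega⟩} with hB3def
    set G : Set Ω := {ω | ∀ m, 1 ≤ m → ∀ hm2 : m ≤ mstar, m ≠ r →
        (lamhat n ω ⟨r, by have := hp n; omega⟩ + h n) /
            (lamhat n ω ⟨r - 1, by have := hp n; omega⟩ + h n) <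
          (lamhat n ω ⟨m, by have := hp n; omega⟩ + h n) /
            (lamhat n ω ⟨m - 1, by have := hp n; omega⟩ + h n)} with hGdef
    -- inclusion: outside the bad events we are in G
    have hincl : ∀ ω, ω ∉ B1 → ω ∉ B2 → ω ∉ B3 → ω ∈ G := by
      intro ω w1 w2 w3
      rw [hB1def, Set.notMem_setOf_iff, not_lt] at w1
      rw [hB2def, Set.notMem_setOf_iff, not_lt] at w2
      rw [hB3def, Set.notMem_setOf_iff, not_lt] at w3
      set l1 := lamhat n ω ⟨0, h0p n⟩ with hl1def
      set lr := lamhat n ω ⟨r - 1, hr1p n⟩ with hlrdef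
      set lr1 := lamhat n ω ⟨r, hrp n⟩ with hlr1def
      have w1' : |l1 - L1| ≤ ε' * L1 + M₁ * γ n := w1
      have w2' : |lr - Lr| ≤ ε' * Lr + M₂ * γ n := w2
      have w3' : lr1 ≤ M₃ * β n := w3
      have hLrp : 0 < Lr := hLr_pos n
      have hL1Lr : Lr ≤ L1 := hL1_ge n
      have hlr1nn : 0 ≤ lr1 := lamhat_nonneg n ω _
      have hhp : 0 < h n := hhpos n
      obtain ⟨key1, key2⟩ := er_keys hε'half hM₃ hK1 hKM (hβ n) hhp hLrp hL1Lr
        e1 e2 e4 e5 e6 w1' w2' w3' (lamhat_nonneg n ω _) hlr1nn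
      -- conclude
      intro m hm1 hm2 hmr
      rcases lt_or_gt_of_ne hmr with hlt | hgt
      · -- m < r
        exact er_aux1 hhp (lamhat_nonneg n ω _) key1 (by linarith)
          (hlamhat_anti n ω (Fin.mk_le_mk.mpr (by omega)))
          (hlamhat_anti n ω (Fin.mk_le_mk.mpr (by omega)))
          (hlamhat_anti n ω (Fin.mk_le_mk.mpr (by omega)))
      · -- m > r
        exact er_aux2 hhp hlr1nn (lamhat_nonneg n ω _) (lamhat_nonneg n ω _) key2
          (hlamhat_anti n ω (Fin.mk_le_mk.mpr (by omega)))
    -- probability bookkeeping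
    have hunion : (Set.univ : Set Ω) ⊆ G ∪ (B1 ∪ B2 ∪ B3) := by
      intro ω _
      by_cases c1 : ω ∈ B1
      · exact Or.inr (Or.inl (Or.inl c1))
      by_cases c2 : ω ∈ B2
      · exact Or.inr (Or.inl (Or.inr c2))
      by_cases c3 : ω ∈ B3
      · exact Or.inr (Or.inr c3)
      · exact Or.inl (hincl ω c1 c2 c3)
    have hsum : (1 : ENNReal) ≤ P G + (P B1 + P B2 + P B3) := by
      calc (1 : ENNReal) = P Set.univ := (measure_univ).symm
        _ ≤ P (G ∪ (B1 ∪ B2 ∪ B3)) := measure_mono hunion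
        _ ≤ P G + P (B1 ∪ B2 ∪ B3) := measure_union_le _ _
        _ ≤ P G + (P (B1 ∪ B2) + P B3) :=
            add_le_add_right (measure_union_le _ _) _
        _ ≤ P G + (P B1 + P B2 + P B3) := by
            exact add_le_add_right (add_le_add_left (measure_union_le _ _) _) _
    have hbsum : P B1 + P B2 + P B3 ≤ ENNReal.ofReal ε := by
      have : P B1 + P B2 + P B3 ≤
          ENNReal.ofReal (2 * ε') + ENNReal.ofReal (2 * ε') + ENNReal.ofReal (2 * ε') :=
        add_le_add (add_le_add hb1.le hb2.le) hb3.le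
      refine this.trans ?_
      rw [← ENNReal.ofReal_add (by linarith) (by linarith),
        ← ENNReal.ofReal_add (by linarith) (by linarith)]
      exact ENNReal.ofReal_le_ofReal (by linarith)
    rw [tsub_le_iff_right]
    calc (1 : ENNReal) ≤ P G + (P B1 + P B2 + P B3) := hsum
      _ ≤ P G + ENNReal.ofReal ε := add_le_add_right hbsum _
  -- conclude the tendsto
  rw [ENNReal.tendsto_nhds ENNReal.one_ne_top]
  intro ε hε
  by_cases hεtop : ε = ⊤
  · filter_upwards with n
    constructor
    · simp [hεtop]
    · exact le_trans prob_le_one (by simp [hεtop])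
  · have hεr : 0 < ε.toReal := ENNReal.toReal_pos hε.ne' hεtop
    filter_upwards [main ε.toReal hεr] with n hn
    constructor
    · rwa [ENNReal.ofReal_toReal hεtop] at hn
    · exact le_trans prob_le_one le_self_add
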